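/- There exists a constant C with the following property: for every α ∈ (0,1] and every function v ∈ C^1(ℝ) such that v does not change sign on ℝ (either v(x) ≥ 0 for all x or v(x) ≤ 0 for all x) and whose derivative v' is α-Hölder continuous on ℝ with constant H, one has |v'(x)|^{1+α} ≤ C · |v(x)|^{α} · H for every x ∈ ℝ (no sign assumption on v' is needed in the case k = 1). -/

import Mathlib

private lemma taylor_aux {α H : ℝ} (hα : α ∈ Set.Ioc (0 : ℝ) 1) {v : ℝ → ℝ}
    (hv : ContDiff ℝ 1 v) (hH : 0 ≤ H)
    (hHold : ∀ x y : ℝ, |deriv v y - deriv v x| ≤ H * |y - x| ^ α) (x y : ℝ) :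
    |v y - v x - deriv v x * (y - x)| ≤ H * |y - x| ^ α * |y - x| := by
  have hdiff : Differentiable ℝ v := hv.differentiable one_ne_zero
  set c := deriv v x with hc
  have key := Convex.norm_image_sub_le_of_norm_hasDerivWithin_le
    (f := fun s => v s - c * s) (f' := fun s => deriv v s - c)
    (s := Set.uIcc x y) (C := H * |y - x| ^ α)
    (fun s _ => by
      have h1 : HasDerivAt (fun s => v s - c * s) (deriv v s - c) s := by
        have := (hdiff s).hasDerivAt.sub ((hasDerivAt_id s).const_mul c); simp only [id, mul_one] at this; exact this
      exact h1.hasDerivWithinAt)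
    (fun s hs => by
      have h1 : |s - x| ≤ |y - x| := by
        rw [Set.uIcc_eq_union] at hs
        rcases hs with hs | hs <;> rw [Set.mem_Icc] at hs <;>
          rw [abs_le] <;> constructor <;> cases' abs_cases (y - x) with h h <;> linarith [hs.1, hs.2]
      have h2 : |s - x| ^ α ≤ |y - x| ^ α :=
        Real.rpow_le_rpow (abs_nonneg _) h1 hα.1.le
      calc ‖deriv v s - c‖ ≤ H * |s - x| ^ α := hHold x s
        _ ≤ H * |y - x| ^ α := by nlinarith [Real.rpow_nonneg (abs_nonneg (s-x)) α]
      )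
    (convex_uIcc x y) Set.left_mem_uIcc Set.right_mem_uIcc
  have : v y - c * y - (v x - c * x) = v y - v x - c * (y - x) := by ring
  rw [Real.norm_eq_abs, this, Real.norm_eq_abs] at key
  exact key

private lemma glaeser_nonneg {α H : ℝ} (hα : α ∈ Set.Ioc (0 : ℝ) 1) {v : ℝ → ℝ}
    (hv : ContDiff ℝ 1 v) (hpos : ∀ x : ℝ, 0 ≤ v x) (hH : 0 ≤ H)
    (hHold : ∀ x y : ℝ, |deriv v y - deriv v x| ≤ H * |y - x| ^ α) (x : ℝ) :
    |deriv v x| ^ (1 + α) ≤ 4 * (v x) ^ α * H := by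
  have hα0 : (0:ℝ) < α := hα.1
  set p := deriv v x with hp
  have key : ∀ t : ℝ, 0 ≤ v x + p * t + H * |t| ^ α * |t| := by
    intro t
    have h1 := taylor_aux hα hv hH hHold x (x + t)
    have h2 : x + t - x = t := by ring
    rw [h2] at h1
    have h3 := hpos (x + t)
    cases' abs_cases (v (x + t) - v x - p * t) with h h <;> nlinarith
  by_cases hp0 : p = 0
  · rw [hp0, abs_zero, Real.zero_rpow (by positivity)]
    have := hpos x
    positivity
  · have hpabs : 0 < |p| := abs_pos.mpr hp0
    by_cases hH0 : H = 0
    · exfalso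
      have h1 := key (-(v x + 1) / p)
      rw [hH0] at h1
      have h2 : p * (-(v x + 1) / p) = -(v x + 1) := by field_simp
      rw [h2] at h1
      simp at h1
      linarith [hpos x]
    · have hHpos : 0 < H := lt_of_le_of_ne hH (Ne.symm hH0)
      set r : ℝ := (|p| / (2 * H)) ^ (1 / α) with hr
      have hrpos : 0 < r := Real.rpow_pos_of_pos (by positivity) _
      have hrα : r ^ α = |p| / (2 * H) := by
        rw [hr, ← Real.rpow_mul (by positivity), one_div,
          inv_mul_cancel₀ (ne_of_gt hα0), Real.rpow_one]
      -- choose t with p * t = -|p| * r and |t| = r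
      obtain ⟨t, hpt, htabs⟩ : ∃ t : ℝ, p * t = -(|p| * r) ∧ |t| = r := by
        rcases lt_or_gt_of_ne hp0 with h | h
        · exact ⟨r, by rw [abs_of_neg h]; ring, abs_of_pos hrpos⟩
        · exact ⟨-r, by rw [abs_of_pos h]; ring, by rw [abs_neg, abs_of_pos hrpos]⟩
      have h1 := key t
      rw [hpt, htabs, hrα] at h1
      have h2 : |p| * r ≤ 2 * v x := by
        have : H * (|p| / (2 * H)) = |p| / 2 := by field_simp
        rw [this] at h1
        nlinarith
      -- raise to power α
      have h3 : (|p| * r) ^ α ≤ (2 * v x) ^ α :=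
        Real.rpow_le_rpow (by positivity) h2 hα0.le
      rw [Real.mul_rpow (abs_nonneg _) hrpos.le, hrα,
        Real.mul_rpow (by norm_num) (hpos x)] at h3
      have h4 : (2:ℝ) ^ α ≤ 2 :=
        (Real.rpow_le_rpow_of_exponent_le (by norm_num) hα.2).trans_eq (Real.rpow_one 2)
      have h5 : |p| ^ α * |p| ≤ 4 * (v x) ^ α * H := by
        have hvα : 0 ≤ (v x) ^ α := Real.rpow_nonneg (hpos x) α
        have h6 : |p| ^ α * (|p| / (2 * H)) ≤ 2 * (v x) ^ α := by nlinarith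
        calc |p| ^ α * |p| = (|p| ^ α * (|p| / (2 * H))) * (2 * H) := by field_simp
          _ ≤ (2 * (v x) ^ α) * (2 * H) := by nlinarith
          _ = 4 * (v x) ^ α * H := by ring
      calc |p| ^ (1 + α) = |p| ^ (1:ℝ) * |p| ^ α := Real.rpow_add hpabs 1 α
        _ = |p| ^ α * |p| := by rw [Real.rpow_one]; ring
        _ ≤ 4 * (v x) ^ α * H := h5

/-- **Glaeser-type inequality for `k = 1`.**
There exists a constant `C` such that for every `α ∈ (0,1]` and every `v ∈ C^1(ℝ)` that
does not change sign on ℝ and whose derivative is `α`-Hölder continuous with constant `H`,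
one has `|v'(x)|^(1+α) ≤ C · |v(x)|^α · H` for all `x` (no sign assumption on `v'`). -/
theorem glaeser_inequality_k_one :
    ∃ C : ℝ, ∀ α : ℝ, α ∈ Set.Ioc (0 : ℝ) 1 → ∀ v : ℝ → ℝ,
      ContDiff ℝ 1 v →
      ((∀ x : ℝ, 0 ≤ v x) ∨ (∀ x : ℝ, v x ≤ 0)) →
      ∀ H : ℝ, 0 ≤ H →
      (∀ x y : ℝ, |deriv v y - deriv v x| ≤ H * |y - x| ^ α) →
      ∀ x : ℝ, |deriv v x| ^ (1 + α) ≤ C * |v x| ^ α * H := by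
  refine ⟨4, fun α hα v hv hsign H hH hHold x => ?_⟩
  rcases hsign with hs | hs
  · rw [abs_of_nonneg (hs x)]
    exact glaeser_nonneg hα hv hs hH hHold x
  · set w : ℝ → ℝ := fun y => -v y with hw
    have hwv : w = -v := rfl
    have hwc : ContDiff ℝ 1 w := hv.neg
    have hwd : ∀ y, deriv w y = -deriv v y := by
      intro y
      show deriv (fun y => -v y) y = -deriv v y
      exact deriv.neg
    have hwpos : ∀ y, 0 ≤ w y := fun y => neg_nonneg.mpr (hs y)
    have hwHold : ∀ a b : ℝ, |deriv w b - deriv w a| ≤ H * |b - a| ^ α := by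
      intro a b
      rw [hwd, hwd, show -deriv v b - -deriv v a = -(deriv v b - deriv v a) by ring, abs_neg]
      exact hHold a b
    have := glaeser_nonneg hα hwc hwpos hH hwHold x
    rw [hwd, abs_neg] at this
    rw [abs_of_nonpos (hs x)]
    simpa [hwv] using this
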